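/- Let K ⊆ L be number fields (so L/K is a finite extension). Suppose ε is a unit of O_K, x ∈ O_K, and δ is a unit of O_L satisfying (ε - 1)·x ≡ δ - 1 (mod (ε - 1)²·O_L). Then (ε - 1)·[L:K]·x ≡ N_{L/K}(δ) - 1 (mod (ε - 1)²·O_K), where N_{L/K} denotes the field norm from L to K (which maps units of O_L to units of O_K). -/

import Mathlib

noncomputable section

open NumberField

/-- Product expansion: `∏ (1 + π * v i) = 1 + π * ∑ v i + π ^ 2 * S` with `S` integral. -/
lemma aux_prod_expand {E : Type*} [CommRing E] (π : E) (hπ : IsIntegral ℤ π)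
    {ι : Type*} (s : Finset ι) (v : ι → E) (hv : ∀ i ∈ s, IsIntegral ℤ (v i)) :
    ∃ S : E, IsIntegral ℤ S ∧
      ∏ i ∈ s, (1 + π * v i) = 1 + π * (∑ i ∈ s, v i) + π ^ 2 * S := by
  classical
  induction s using Finset.cons_induction with
  | empty => exact ⟨0, isIntegral_zero, by simp⟩
  | cons a s ha ih =>
      obtain ⟨S, hS, hprod⟩ := ih (fun i hi => hv i (Finset.mem_cons_of_mem hi))
      have hva : IsIntegral ℤ (v a) := hv a (Finset.mem_cons_self a s)
      have hsum : IsIntegral ℤ (∑ i ∈ s, v i) :=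
        IsIntegral.sum _ (fun i hi => hv i (Finset.mem_cons_of_mem hi))
      refine ⟨S + v a * (∑ i ∈ s, v i) + π * (v a * S), ?_, ?_⟩
      · exact (hS.add (hva.mul hsum)).add (hπ.mul (hva.mul hS))
      · rw [Finset.prod_cons, hprod, Finset.sum_cons]; ring

theorem stmt3 (K L : Type) [Field K] [NumberField K] [Field L] [NumberField L]
    [Algebra K L] (ε : (𝓞 K)ˣ) (x : 𝓞 K) (δ : (𝓞 L)ˣ)
    (hcong : ∃ w : 𝓞 L,
      (δ : 𝓞 L) - 1 - algebraMap (𝓞 K) (𝓞 L) ((ε : 𝓞 K) - 1) * algebraMap (𝓞 K) (𝓞 L) x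
        = (algebraMap (𝓞 K) (𝓞 L) ((ε : 𝓞 K) - 1)) ^ 2 * w) :
    ∃ w : 𝓞 K,
      Algebra.norm K ((δ : 𝓞 L) : L) - 1
          - (((ε : 𝓞 K) : K) - 1) * (Module.finrank K L : K) * ((x : K))
        = ((((ε : 𝓞 K) : K) - 1)) ^ 2 * ((w : K)) := by
  classical
  haveI : FiniteDimensional K L := FiniteDimensional.right ℚ K L
  haveI : Algebra.IsSeparable K L := by infer_instance
  obtain ⟨w₀, hw₀⟩ := hcong
  set E := AlgebraicClosure K
  -- notation
  set π : K := ((ε : 𝓞 K) : K) - 1 with hπ_def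
  have hπ_int : IsIntegral ℤ π := ((ε : 𝓞 K) - 1).2
  have hπ_coe : ((((ε : 𝓞 K) - 1 : 𝓞 K)) : K) = π := by
    push_cast [hπ_def]; ring
  have hcoeKL : ∀ a : 𝓞 K, ((algebraMap (𝓞 K) (𝓞 L) a : 𝓞 L) : L) = algebraMap K L ((a : K)) :=
    fun a => rfl
  set πO : 𝓞 K := (ε : 𝓞 K) - 1 with hπO
  -- u : 𝓞 L with δ = 1 + π • u  (in L)
  set u : 𝓞 L := algebraMap (𝓞 K) (𝓞 L) x + algebraMap (𝓞 K) (𝓞 L) πO * w₀ with hu_def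
  have hδ : ((δ : 𝓞 L) : L) = 1 + algebraMap K L π * (u : L) := by
    have h1 : (δ : 𝓞 L) = 1 + (algebraMap (𝓞 K) (𝓞 L) πO) * u := by
      rw [hu_def, hπO]; rw [sub_sub, sub_eq_iff_eq_add] at hw₀
      rw [hw₀]; ring
    calc ((δ : 𝓞 L) : L) = ((1 + (algebraMap (𝓞 K) (𝓞 L) πO) * u : 𝓞 L) : L) := by
          rw [← h1]
      _ = 1 + ((algebraMap (𝓞 K) (𝓞 L) πO : 𝓞 L) : L) * (u : L) := by push_cast; ring
      _ = 1 + algebraMap K L π * (u : L) := by rw [hcoeKL, hπ_coe]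
  -- integrality of embedded images
  have hu_int : IsIntegral ℤ ((u : L)) := RingOfIntegers.isIntegral_coe u
  -- product over embeddings
  obtain ⟨S, hS_int, hS⟩ := aux_prod_expand (algebraMap K E π) (hπ_int.map (algebraMap K E).toIntAlgHom)
    (Finset.univ : Finset (L →ₐ[K] E)) (fun σ => σ (u : L))
    (fun σ _ => hu_int.map ((σ : L →+* E).toIntAlgHom))
  have hnorm : algebraMap K E (Algebra.norm K ((δ : 𝓞 L) : L))
      = 1 + algebraMap K E π * (∑ σ : L →ₐ[K] E, σ (u : L))
        + algebraMap K E π ^ 2 * S := by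
    rw [Algebra.norm_eq_prod_embeddings, ← hS]
    refine Finset.prod_congr rfl fun σ _ => ?_
    rw [hδ]
    simp [map_add, map_mul, σ.commutes]
  -- the trace of u
  have htrace : ∑ σ : L →ₐ[K] E, σ (u : L)
      = algebraMap K E (Algebra.trace K L (u : L)) :=
    (trace_eq_sum_embeddings E).symm
  -- compute trace of u
  have hu_coe : (u : L) = algebraMap K L ((x : K)) + algebraMap K L π * ((w₀ : L)) := by
    rw [hu_def, hπ_def]
    rfl
  have htr : Algebra.trace K L (u : L)
      = (Module.finrank K L : K) * (x : K) + π * Algebra.trace K L ((w₀ : L)) := by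
    rw [hu_coe, map_add, Algebra.trace_algebraMap, ← Algebra.smul_def, map_smul]
    simp [Algebra.smul_def, mul_comm]
  set Tw : K := Algebra.trace K L ((w₀ : L)) with hTw
  have hTw_int : IsIntegral ℤ Tw := Algebra.isIntegral_trace (RingOfIntegers.isIntegral_coe w₀)
  -- put together: algebraMap K E c = πE^2 * T
  set c : K := Algebra.norm K ((δ : 𝓞 L) : L) - 1 - π * (Module.finrank K L : K) * (x : K) with hc
  have hkey : algebraMap K E c = algebraMap K E π ^ 2 * (algebraMap K E Tw + S) := by
    rw [hc, map_sub, map_sub, hnorm, htrace, htr]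
    push_cast [map_add, map_mul, map_one]
    ring
  by_cases hπ0 : π = 0
  · refine ⟨0, ?_⟩
    have : algebraMap K E c = 0 := by rw [hkey, hπ0]; simp
    have hc0 : c = 0 := by
      exact (map_eq_zero_iff _ (algebraMap K E).injective).mp this
    show c = π ^ 2 * ((0 : 𝓞 K) : K)
    simp [hc0]
  · -- c / π^2 is integral
    have hT_int : IsIntegral ℤ (algebraMap K E Tw + S) :=
      (hTw_int.map (algebraMap K E).toIntAlgHom).add hS_int
    have hT_eq : algebraMap K E Tw + S = algebraMap K E (c / π ^ 2) := by
      have hπE : algebraMap K E π ≠ 0 := by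
        simpa using (map_ne_zero_iff _ (algebraMap K E).injective).mpr hπ0
      rw [map_div₀, map_pow, eq_div_iff (pow_ne_zero 2 hπE)]
      rw [hkey]; ring
    have hcq_int : IsIntegral ℤ (c / π ^ 2) := by
      rw [hT_eq] at hT_int
      exact (isIntegral_algebraMap_iff (algebraMap K E).injective).mp hT_int
    refine ⟨⟨c / π ^ 2, hcq_int⟩, ?_⟩
    show c = π ^ 2 * (c / π ^ 2)
    field_simp
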